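/- If L ⊆ ℕ is recursively enumerable, then the one-dimensional subshift X_L ⊆ {0,1}^ℤ consisting of configurations with at most two 1's such that, if exactly two 1's occur at distance n, then n ∉ { 2^m : m ∈ L }, is a Π⁰₁ subshift; moreover, if L is RE-complete then the language of patterns not occurring in X_L is co-RE-complete. -/

import Mathlib

/-- A finite one-dimensional pattern over `{0,1}`, encoded as a list of
(coordinate, symbol) pairs, occurs in `x` at `v`. -/
def patOccursAt1 (P : List (ℤ × Bool)) (v : ℤ) (x : ℤ → Bool) : Prop :=
  ∀ p ∈ P, x (v + p.1) = p.2

/-- The subshift `X_L`: configurations with at most two 1's such that if two 1's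
occur at distance `n`, then `n ≠ 2^m` for all `m ∈ L`. -/
def XL (L : ℕ → Prop) : Set (ℤ → Bool) :=
  {x | (∀ s : Finset ℤ, (∀ i ∈ s, x i = true) → s.card ≤ 2) ∧
       ∀ i j : ℤ, i < j → x i = true → x j = true → ∀ m : ℕ, L m → j - i ≠ 2 ^ m}


open Encodable Part

/-! ### RE combinators -/

section Combinators
variable {α : Type*} [Primcodable α]

theorem mem_assert_unit {p : Prop} {u : Unit} :
    u ∈ Part.assert p (fun _ => Part.some ()) ↔ p := by
  simp [Part.mem_assert_iff]

theorem REPred.or' {p q : α → Prop} (hp : REPred p) (hq : REPred q) :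
    REPred fun a => p a ∨ q a := by
  obtain ⟨k, hk, hk2⟩ := Partrec.merge hp hq (fun a x hx y hy => by
    cases x; cases y; rfl)
  refine hk.of_eq fun a => Part.ext fun u => ?_
  cases u
  rw [hk2, mem_assert_unit, mem_assert_unit, mem_assert_unit]

theorem REPred.and' {p q : α → Prop} (hp : REPred p) (hq : REPred q) :
    REPred fun a => p a ∧ q a := by
  have := Partrec.bind (f := fun a => Part.assert (p a) fun _ => Part.some ())
    (g := fun a (_ : Unit) => Part.assert (q a) fun _ => Part.some ()) hp
    (hq.comp Computable.fst)
  refine this.of_eq fun a => Part.ext fun u => ?_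
  cases u
  simp only [Part.mem_bind_iff, mem_assert_unit]
  constructor
  · rintro ⟨⟨⟩, h1, h2⟩; exact ⟨h1, h2⟩
  · rintro ⟨h1, h2⟩; exact ⟨(), h1, h2⟩

theorem REPred.of_bool {f : α → Bool} (hf : Computable f) :
    REPred fun a => f a = true :=
  ComputablePred.to_re (p := fun a => f a = true) ⟨by infer_instance, by simpa using hf⟩

/-- RE predicates are closed under existential quantification over ℕ. -/
theorem REPred.exnat {q : α × ℕ → Prop} (hq : REPred q) :
    REPred fun a => ∃ n, q (a, n) := by
  have hN : Nat.Partrec fun n => (decode (α := α × ℕ) n : Part (α × ℕ)).bind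
      fun x => Part.map encode (Part.assert (q x) fun _ => Part.some ()) := hq
  obtain ⟨c, hc⟩ := Nat.Partrec.Code.exists_code.1 hN
  have hg : Primrec fun p : α × ℕ =>
      ((p.2.unpair.1, c), encode (p.1, p.2.unpair.2)) :=
    Primrec.pair
      (Primrec.pair ((Primrec.fst.comp Primrec.unpair).comp Primrec.snd)
        (Primrec.const c))
      (Primrec.encode.comp (Primrec.pair Primrec.fst
        ((Primrec.snd.comp Primrec.unpair).comp Primrec.snd)))
  have hcomp : Computable₂ fun (a : α) (k : ℕ) =>
      Nat.Partrec.Code.evaln k.unpair.1 c (encode (a, k.unpair.2)) :=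
    (Nat.Partrec.Code.primrec_evaln.comp hg).to_comp
  have hpart : Partrec fun a : α => Nat.rfindOpt fun k =>
      Nat.Partrec.Code.evaln k.unpair.1 c (encode (a, k.unpair.2)) :=
    Partrec.rfindOpt hcomp
  refine hpart.dom_re.of_eq fun a => ?_
  rw [Nat.rfindOpt_dom]
  constructor
  · rintro ⟨k, x, hx⟩
    have h1 := Nat.Partrec.Code.evaln_sound hx
    rw [hc] at h1
    simp only [Part.mem_bind_iff, Part.mem_coe, Option.mem_def, encodek,
      Option.some_inj, Part.mem_map_iff, mem_assert_unit] at h1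
    obtain ⟨y, hy, -, hq2, -⟩ := h1
    exact ⟨(Nat.unpair k).2, hy ▸ hq2⟩
  · rintro ⟨n, hn⟩
    have h2 : encode () ∈ Nat.Partrec.Code.eval c (encode (a, n)) := by
      rw [hc]
      simp only [Part.mem_bind_iff, Part.mem_coe, Option.mem_def, encodek,
        Option.some_inj, Part.mem_map_iff, mem_assert_unit]
      exact ⟨(a, n), rfl, (), hn, trivial⟩
    obtain ⟨k, hk⟩ := Nat.Partrec.Code.evaln_complete.1 h2
    refine ⟨Nat.pair k n, encode (), ?_⟩
    simpa [Nat.unpair_pair] using hk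

end Combinators

/-! ### Decision functions -/

theorem encZ_ofNat (n : ℕ) : Encodable.encode (Int.ofNat n) = 2 * n := rfl

theorem encZ_negSucc (n : ℕ) : Encodable.encode (Int.negSucc n) = 2 * n + 1 := rfl

/-- Nat-level test, on codes `i`, `j` of integers `x`, `y`, whether `y - x = t/2`
where `t` is (intended to be) `2^(m+1)`. -/
def distC (i j t : ℕ) : Bool :=
  (i % 2 == 0 && j % 2 == 0 && (j == i + t)) ||
  (i % 2 == 1 && j % 2 == 0 && (j + i + 1 == t)) ||
  (i % 2 == 1 && j % 2 == 1 && (i == j + t))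

theorem distC_iff (x y : ℤ) (m : ℕ) :
    distC (Encodable.encode x) (Encodable.encode y) (2 ^ (m + 1)) = true ↔
      y - x = 2 ^ m := by
  have h1 : (2 : ℤ) ^ m = ((2 ^ m : ℕ) : ℤ) := by exact_mod_cast rfl
  have h2 : (2 : ℕ) ^ (m + 1) = 2 * 2 ^ m := by ring
  have h3 : 1 ≤ (2 : ℕ) ^ m := Nat.one_le_two_pow
  rw [h1, h2]
  generalize (2 : ℕ) ^ m = K at h3 ⊢
  cases x with
  | ofNat n =>
    cases y with
    | ofNat n' =>
      rw [encZ_ofNat, encZ_ofNat]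
      simp only [distC, beq_iff_eq, Bool.and_eq_true, Bool.or_eq_true, Int.ofNat_eq_coe]
      omega
    | negSucc n' =>
      rw [encZ_ofNat, encZ_negSucc]
      simp only [distC, beq_iff_eq, Bool.and_eq_true, Bool.or_eq_true, Int.ofNat_eq_coe,
        Int.negSucc_eq]
      omega
  | negSucc n =>
    cases y with
    | ofNat n' =>
      rw [encZ_negSucc, encZ_ofNat]
      simp only [distC, beq_iff_eq, Bool.and_eq_true, Bool.or_eq_true, Int.ofNat_eq_coe,
        Int.negSucc_eq]
      omega
    | negSucc n' =>
      rw [encZ_negSucc, encZ_negSucc]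
      simp only [distC, beq_iff_eq, Bool.and_eq_true, Bool.or_eq_true, Int.negSucc_eq]
      omega

def badB (P : List (ℤ × Bool)) : Bool :=
  P.any fun p => P.any fun q => decide (p.1 = q.1) && !(decide (p.2 = q.2))

def threeB (P : List (ℤ × Bool)) : Bool :=
  P.any fun p => P.any fun q => P.any fun r =>
    p.2 && q.2 && r.2 && !(decide (p.1 = q.1)) && !(decide (p.1 = r.1)) &&
      !(decide (q.1 = r.1))

def pairB (P : List (ℤ × Bool)) (m : ℕ) : Bool :=
  P.any fun p => P.any fun q =>
    p.2 && q.2 && distC (Encodable.encode p.1) (Encodable.encode q.1) (2 ^ (m + 1))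

def badP (P : List (ℤ × Bool)) : Prop :=
  ∃ p ∈ P, ∃ q ∈ P, p.1 = q.1 ∧ p.2 ≠ q.2

def threeP (P : List (ℤ × Bool)) : Prop :=
  ∃ p ∈ P, ∃ q ∈ P, ∃ r ∈ P, p.2 = true ∧ q.2 = true ∧ r.2 = true ∧
    p.1 ≠ q.1 ∧ p.1 ≠ r.1 ∧ q.1 ≠ r.1

def pairP (P : List (ℤ × Bool)) (m : ℕ) : Prop :=
  ∃ p ∈ P, ∃ q ∈ P, p.2 = true ∧ q.2 = true ∧ q.1 - p.1 = 2 ^ m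

theorem badB_iff (P : List (ℤ × Bool)) : badB P = true ↔ badP P := by
  simp [badB, badP, List.any_eq_true, Bool.and_eq_true]

theorem threeB_iff (P : List (ℤ × Bool)) : threeB P = true ↔ threeP P := by
  simp [threeB, threeP, List.any_eq_true, Bool.and_eq_true, and_assoc]

theorem pairB_iff (P : List (ℤ × Bool)) (m : ℕ) : pairB P m = true ↔ pairP P m := by
  simp [pairB, pairP, List.any_eq_true, Bool.and_eq_true, distC_iff, and_assoc]

/-! ### Primrec proofs -/

theorem any_eq_foldr {β} (l : List β) (p : β → Bool) :
    l.foldr (fun b s => p b || s) false = l.any p := by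
  induction l <;> simp [*]

theorem Primrec.list_any' {α β} [Primcodable α] [Primcodable β] {f : α → List β}
    {p : α → β → Bool} (hf : Primrec f) (hp : Primrec₂ p) :
    Primrec fun a => (f a).any (p a) := by
  have h : Primrec fun a => (f a).foldr (fun b s => p a b || s) false :=
    Primrec.list_foldr hf (Primrec.const false)
      ((Primrec.or.comp (hp.comp Primrec.fst (Primrec.fst.comp Primrec.snd))
        (Primrec.snd.comp Primrec.snd)).to₂)
  exact h.of_eq fun a => any_eq_foldr _ _

theorem primrec_pow2 : Primrec fun m : ℕ => 2 ^ (m + 1) :=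
  (Primrec₂.unpaired'.1 Nat.Primrec.pow).comp (Primrec.const 2) Primrec.succ

theorem primrec_distC : Primrec fun x : ℕ × ℕ × ℕ => distC x.1 x.2.1 x.2.2 := by
  unfold distC
  have i : Primrec fun x : ℕ × ℕ × ℕ => x.1 := Primrec.fst
  have j : Primrec fun x : ℕ × ℕ × ℕ => x.2.1 := Primrec.fst.comp Primrec.snd
  have t : Primrec fun x : ℕ × ℕ × ℕ => x.2.2 := Primrec.snd.comp Primrec.snd
  have m2 : ∀ {g : ℕ × ℕ × ℕ → ℕ}, Primrec g → ∀ (r : ℕ),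
      Primrec fun x => g x % 2 == r := fun hg r =>
    Primrec.beq.comp (Primrec.nat_mod.comp hg (Primrec.const 2)) (Primrec.const r)
  exact Primrec.or.comp
    (Primrec.or.comp
      (Primrec.and.comp (Primrec.and.comp (m2 i 0) (m2 j 0))
        (Primrec.beq.comp j (Primrec.nat_add.comp i t)))
      (Primrec.and.comp (Primrec.and.comp (m2 i 1) (m2 j 0))
        (Primrec.beq.comp (Primrec.nat_add.comp (Primrec.nat_add.comp j i)
          (Primrec.const 1)) t)))
    (Primrec.and.comp (Primrec.and.comp (m2 i 1) (m2 j 1))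
      (Primrec.beq.comp i (Primrec.nat_add.comp j t)))

theorem primrec_badB : Primrec badB := by
  unfold badB
  have hp3 : Primrec₂ fun (y : List (ℤ × Bool) × (ℤ × Bool)) (q : ℤ × Bool) =>
      decide (y.2.1 = q.1) && !(decide (y.2.2 = q.2)) :=
    (Primrec.and.comp
      (Primrec.eq.comp ((Primrec.fst.comp Primrec.snd).comp Primrec.fst)
        (Primrec.fst.comp Primrec.snd)).decide
      (Primrec.not.comp
        (Primrec.eq.comp ((Primrec.snd.comp Primrec.snd).comp Primrec.fst)
          (Primrec.snd.comp Primrec.snd)).decide)).to₂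
  have hp1 : Primrec₂ fun (P : List (ℤ × Bool)) (p : ℤ × Bool) =>
      P.any fun q => decide (p.1 = q.1) && !(decide (p.2 = q.2)) :=
    (Primrec.list_any' Primrec.fst hp3).to₂
  exact Primrec.list_any' Primrec.id hp1

theorem primrec_threeB : Primrec threeB := by
  unfold threeB
  have hp3 : Primrec₂ fun (z : (List (ℤ × Bool) × (ℤ × Bool)) × (ℤ × Bool))
      (r : ℤ × Bool) =>
      z.1.2.2 && z.2.2 && r.2 && !(decide (z.1.2.1 = z.2.1)) &&
        !(decide (z.1.2.1 = r.1)) && !(decide (z.2.1 = r.1)) := by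
    have a1 : Primrec fun w : ((List (ℤ × Bool) × (ℤ × Bool)) × (ℤ × Bool)) × (ℤ × Bool) =>
        w.1.1.2.2 := Primrec.snd.comp (Primrec.snd.comp (Primrec.fst.comp Primrec.fst))
    have a2 : Primrec fun w : ((List (ℤ × Bool) × (ℤ × Bool)) × (ℤ × Bool)) × (ℤ × Bool) =>
        w.1.2.2 := Primrec.snd.comp (Primrec.snd.comp Primrec.fst)
    have a3 : Primrec fun w : ((List (ℤ × Bool) × (ℤ × Bool)) × (ℤ × Bool)) × (ℤ × Bool) =>
        w.2.2 := Primrec.snd.comp Primrec.snd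
    have c1 : Primrec fun w : ((List (ℤ × Bool) × (ℤ × Bool)) × (ℤ × Bool)) × (ℤ × Bool) =>
        w.1.1.2.1 := Primrec.fst.comp (Primrec.snd.comp (Primrec.fst.comp Primrec.fst))
    have c2 : Primrec fun w : ((List (ℤ × Bool) × (ℤ × Bool)) × (ℤ × Bool)) × (ℤ × Bool) =>
        w.1.2.1 := Primrec.fst.comp (Primrec.snd.comp Primrec.fst)
    have c3 : Primrec fun w : ((List (ℤ × Bool) × (ℤ × Bool)) × (ℤ × Bool)) × (ℤ × Bool) =>
        w.2.1 := Primrec.fst.comp Primrec.snd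
    exact (Primrec.and.comp (Primrec.and.comp (Primrec.and.comp
      (Primrec.and.comp (Primrec.and.comp a1 a2) a3)
      (Primrec.not.comp (Primrec.eq.comp c1 c2).decide))
      (Primrec.not.comp (Primrec.eq.comp c1 c3).decide))
      (Primrec.not.comp (Primrec.eq.comp c2 c3).decide)).to₂
  have hp2 : Primrec₂ fun (y : List (ℤ × Bool) × (ℤ × Bool)) (q : ℤ × Bool) =>
      y.1.any fun r => y.2.2 && q.2 && r.2 && !(decide (y.2.1 = q.1)) &&
        !(decide (y.2.1 = r.1)) && !(decide (q.1 = r.1)) :=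
    (Primrec.list_any' (Primrec.fst.comp Primrec.fst) hp3).to₂
  have hp1 : Primrec₂ fun (P : List (ℤ × Bool)) (p : ℤ × Bool) =>
      P.any fun q => P.any fun r => p.2 && q.2 && r.2 && !(decide (p.1 = q.1)) &&
        !(decide (p.1 = r.1)) && !(decide (q.1 = r.1)) :=
    (Primrec.list_any' Primrec.fst hp2).to₂
  exact Primrec.list_any' Primrec.id hp1

theorem primrec_pairB : Primrec fun y : List (ℤ × Bool) × ℕ => pairB y.1 y.2 := by
  unfold pairB
  have hp2 : Primrec₂ fun (z : (List (ℤ × Bool) × ℕ) × (ℤ × Bool)) (q : ℤ × Bool) =>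
      z.2.2 && q.2 && distC (Encodable.encode z.2.1) (Encodable.encode q.1)
        (2 ^ (z.1.2 + 1)) := by
    have b1 : Primrec fun w : ((List (ℤ × Bool) × ℕ) × (ℤ × Bool)) × (ℤ × Bool) =>
        w.1.2.2 := Primrec.snd.comp (Primrec.snd.comp Primrec.fst)
    have b2 : Primrec fun w : ((List (ℤ × Bool) × ℕ) × (ℤ × Bool)) × (ℤ × Bool) =>
        w.2.2 := Primrec.snd.comp Primrec.snd
    have e1 : Primrec fun w : ((List (ℤ × Bool) × ℕ) × (ℤ × Bool)) × (ℤ × Bool) =>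
        Encodable.encode w.1.2.1 :=
      Primrec.encode.comp (Primrec.fst.comp (Primrec.snd.comp Primrec.fst))
    have e2 : Primrec fun w : ((List (ℤ × Bool) × ℕ) × (ℤ × Bool)) × (ℤ × Bool) =>
        Encodable.encode w.2.1 :=
      Primrec.encode.comp (Primrec.fst.comp Primrec.snd)
    have e3 : Primrec fun w : ((List (ℤ × Bool) × ℕ) × (ℤ × Bool)) × (ℤ × Bool) =>
        2 ^ (w.1.1.2 + 1) :=
      primrec_pow2.comp (Primrec.snd.comp (Primrec.fst.comp Primrec.fst))
    exact (Primrec.and.comp (Primrec.and.comp b1 b2)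
      (primrec_distC.comp (Primrec.pair e1 (Primrec.pair e2 e3)))).to₂
  have hp1 : Primrec₂ fun (y : List (ℤ × Bool) × ℕ) (p : ℤ × Bool) =>
      y.1.any fun q => p.2 && q.2 &&
        distC (Encodable.encode p.1) (Encodable.encode q.1) (2 ^ (y.2 + 1)) :=
    (Primrec.list_any' (Primrec.fst.comp Primrec.fst) hp2).to₂
  exact Primrec.list_any' Primrec.fst hp1

theorem primrec_redF :
    Primrec fun m : ℕ => [((0 : ℤ), true), (Int.ofNat (2 ^ m), true)] := by
  have hInt : Primrec fun m : ℕ => Int.ofNat (2 ^ m) :=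
    Primrec.encode_iff.1 (primrec_pow2.of_eq fun m => by rw [encZ_ofNat]; ring)
  exact Primrec.list_cons.comp
    (Primrec.pair (Primrec.const (0 : ℤ)) (Primrec.const true))
    (Primrec.list_cons.comp (Primrec.pair hInt (Primrec.const true))
      (Primrec.const ([] : List (ℤ × Bool))))

/-! ### The characterization of non-occurring patterns -/

def BadPat (L : ℕ → Prop) (P : List (ℤ × Bool)) : Prop :=
  badP P ∨ threeP P ∨ ∃ m, L m ∧ pairP P m

theorem exists_three_of_card {s : Finset ℤ} (h : 2 < s.card) :
    ∃ a ∈ s, ∃ b ∈ s, ∃ c ∈ s, a ≠ b ∧ a ≠ c ∧ b ≠ c := by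
  have h0 : 0 < s.card := by omega
  obtain ⟨a, ha⟩ := Finset.card_pos.1 h0
  have he1 : 1 < (s.erase a).card := by rw [Finset.card_erase_of_mem ha]; omega
  have h0' : 0 < (s.erase a).card := by omega
  obtain ⟨b, hb⟩ := Finset.card_pos.1 h0'
  have he2 : 0 < ((s.erase a).erase b).card := by
    rw [Finset.card_erase_of_mem hb]; omega
  obtain ⟨c, hc⟩ := Finset.card_pos.1 he2
  have hba := Finset.mem_erase.1 hb
  have hcb := Finset.mem_erase.1 hc
  have hca := Finset.mem_erase.1 hcb.2
  exact ⟨a, ha, b, hba.2, c, hca.2, fun h => hba.1 h.symm, fun h => hca.1 h.symm,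
    fun h => hcb.1 h.symm⟩

theorem badPat_notOcc {L : ℕ → Prop} {P : List (ℤ × Bool)} (h : BadPat L P) :
    ∀ x ∈ XL L, ∀ v : ℤ, ¬ patOccursAt1 P v x := by
  rintro x ⟨hx1, hx2⟩ v hocc
  rcases h with ⟨p, hp, q, hq, h1, h2⟩ | ⟨p, hp, q, hq, r, hr, hpt, hqt, hrt, h1, h2, h3⟩ |
    ⟨m, hm, p, hp, q, hq, hpt, hqt, hd⟩
  · exact h2 (by rw [← hocc p hp, ← hocc q hq, h1])
  · have hs : ∀ i ∈ ({v + p.1, v + q.1, v + r.1} : Finset ℤ), x i = true := by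
      intro i hi
      simp only [Finset.mem_insert, Finset.mem_singleton] at hi
      rcases hi with rfl | rfl | rfl
      · rw [hocc p hp, hpt]
      · rw [hocc q hq, hqt]
      · rw [hocc r hr, hrt]
    have hcard : ({v + p.1, v + q.1, v + r.1} : Finset ℤ).card = 3 := by
      rw [Finset.card_insert_of_notMem, Finset.card_insert_of_notMem,
        Finset.card_singleton]
      · simp only [Finset.mem_singleton]; omega
      · simp only [Finset.mem_insert, Finset.mem_singleton]; omega
    have := hx1 _ hs
    omega
  · have hpow : (0 : ℤ) < 2 ^ m := by positivity
    have hlt : v + p.1 < v + q.1 := by omega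
    refine hx2 (v + p.1) (v + q.1) hlt ?_ ?_ m hm ?_
    · rw [hocc p hp, hpt]
    · rw [hocc q hq, hqt]
    · omega

theorem occurs_of_not_badPat {L : ℕ → Prop} {P : List (ℤ × Bool)}
    (h : ¬ BadPat L P) :
    ∃ x ∈ XL L, patOccursAt1 P 0 x := by
  simp only [BadPat, not_or, not_exists] at h
  obtain ⟨h1, h2, h3⟩ := h
  push_neg at h3
  refine ⟨fun i => decide ((i, true) ∈ P), ⟨?_, ?_⟩, ?_⟩
  · intro s hs
    by_contra hc
    obtain ⟨a, ha, b, hb, c, hc', hab, hac, hbc⟩ := exists_three_of_card (s := s) (by omega)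
    have ma : ((a, true) : ℤ × Bool) ∈ P := of_decide_eq_true (hs a ha)
    have mb : ((b, true) : ℤ × Bool) ∈ P := of_decide_eq_true (hs b hb)
    have mc : ((c, true) : ℤ × Bool) ∈ P := of_decide_eq_true (hs c hc')
    exact h2 ⟨_, ma, _, mb, _, mc, rfl, rfl, rfl, hab, hac, hbc⟩
  · intro i j hij hxi hxj m hm hd
    exact h3 m hm ⟨_, of_decide_eq_true hxi, _, of_decide_eq_true hxj, rfl, rfl, by
      simpa using hd⟩
  · intro p hp
    rw [zero_add]
    cases hpt : p.2
    · apply decide_eq_false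
      intro hmem
      exact h1 ⟨_, hmem, p, hp, rfl, by rw [hpt]; simp⟩
    · apply decide_eq_true
      have : p = (p.1, true) := by rw [← hpt]
      rwa [this] at hp

theorem notOcc_iff_badPat (L : ℕ → Prop) (P : List (ℤ × Bool)) :
    (∀ x ∈ XL L, ∀ v : ℤ, ¬ patOccursAt1 P v x) ↔ BadPat L P := by
  constructor
  · intro h
    by_contra hb
    obtain ⟨x, hx, hocc⟩ := occurs_of_not_badPat hb
    exact h x hx 0 hocc
  · exact badPat_notOcc

theorem XL_eq (L : ℕ → Prop) :
    XL L = {x | ∀ P, (∀ y ∈ XL L, ∀ v : ℤ, ¬ patOccursAt1 P v y) →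
      ∀ v : ℤ, ¬ patOccursAt1 P v x} := by
  ext x
  constructor
  · intro hx P hP v hocc
    exact hP x hx v hocc
  · intro hx
    constructor
    · intro s hs
      by_contra hc
      obtain ⟨a, ha, b, hb, c, hc', hab, hac, hbc⟩ := exists_three_of_card (s := s) (by omega)
      have hN : ∀ y ∈ XL L, ∀ v : ℤ,
          ¬ patOccursAt1 [((0:ℤ), true), (b - a, true), (c - a, true)] v y :=
        badPat_notOcc (Or.inr (Or.inl
          ⟨((0:ℤ), true), by simp, (b - a, true), by simp, (c - a, true), by simp,
            rfl, rfl, rfl,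
            by simp only; intro h; exact hab (by omega),
            by simp only; intro h; exact hac (by omega),
            by simp only; intro h; exact hbc (by omega)⟩))
      refine hx _ hN a ?_
      intro p hp
      simp only [List.mem_cons, List.mem_singleton, List.not_mem_nil, or_false] at hp
      rcases hp with rfl | rfl | rfl
      · simpa using hs a ha
      · rw [show a + (b - a) = b by ring]; simpa using hs b hb
      · rw [show a + (c - a) = c by ring]; simpa using hs c hc'
    · intro i j hij hxi hxj m hm hd
      have hN : ∀ y ∈ XL L, ∀ v : ℤ,
          ¬ patOccursAt1 [((0:ℤ), true), (j - i, true)] v y :=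
        badPat_notOcc (Or.inr (Or.inr ⟨m, hm,
          ((0:ℤ), true), by simp, (j - i, true), by simp, rfl, rfl,
          by simpa using hd⟩))
      refine hx _ hN i ?_
      intro p hp
      simp only [List.mem_cons, List.mem_singleton, List.not_mem_nil, or_false] at hp
      rcases hp with rfl | rfl
      · simpa using hxi
      · rw [show i + (j - i) = j by ring]; simpa using hxj

/-! ### RE-ness of the set of non-occurring patterns -/

theorem rePred_notOcc (L : ℕ → Prop) (hL : REPred L) :
    REPred (fun P : List (ℤ × Bool) => ∀ x ∈ XL L, ∀ v : ℤ, ¬ patOccursAt1 P v x) := by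
  have hQ : REPred (fun y : List (ℤ × Bool) × ℕ =>
      ((badB y.1 || threeB y.1) = true) ∨ (L y.2 ∧ pairB y.1 y.2 = true)) := by
    apply REPred.or'
    · exact REPred.of_bool (Primrec.to_comp
        (Primrec.or.comp (primrec_badB.comp Primrec.fst)
          (primrec_threeB.comp Primrec.fst)))
    · have h1 : REPred fun y : List (ℤ × Bool) × ℕ => L y.2 := hL.comp Computable.snd
      exact h1.and' (REPred.of_bool primrec_pairB.to_comp)
  refine hQ.exnat.of_eq fun P => ?_
  rw [notOcc_iff_badPat]
  constructor
  · rintro ⟨n, hn | ⟨hLn, hp⟩⟩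
    · rw [Bool.or_eq_true, badB_iff, threeB_iff] at hn
      exact hn.imp id Or.inl
    · exact Or.inr (Or.inr ⟨n, hLn, (pairB_iff _ _).1 hp⟩)
  · rintro (h | h | ⟨m, hm, h⟩)
    · exact ⟨0, Or.inl (by rw [Bool.or_eq_true, badB_iff]; exact Or.inl h)⟩
    · exact ⟨0, Or.inl (by rw [Bool.or_eq_true, threeB_iff]; exact Or.inr h)⟩
    · exact ⟨m, Or.inr ⟨hm, (pairB_iff _ _).2 h⟩⟩

/-! ### The reduction -/

theorem L_iff_notOcc (L : ℕ → Prop) (m : ℕ) :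
    L m ↔ (∀ x ∈ XL L, ∀ v : ℤ,
      ¬ patOccursAt1 [((0:ℤ), true), (Int.ofNat (2 ^ m), true)] v x) := by
  rw [notOcc_iff_badPat]
  have hcast : (Int.ofNat (2 ^ m) : ℤ) = (2:ℤ) ^ m := by exact_mod_cast rfl
  constructor
  · intro hm
    exact Or.inr (Or.inr ⟨m, hm, ((0:ℤ), true), by simp,
      (Int.ofNat (2 ^ m), true), by simp, rfl, rfl, by simp⟩)
  · rintro (⟨p, hp, q, hq, h1, h2⟩ |
      ⟨p, hp, q, hq, r, hr, hpt, hqt, hrt, h1, h2, h3⟩ |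
      ⟨m', hm', p, hp, q, hq, hpt, hqt, hd⟩)
    · exfalso
      simp only [List.mem_cons, List.mem_singleton, List.not_mem_nil, or_false] at hp hq
      rcases hp with rfl | rfl <;> rcases hq with rfl | rfl <;> simp_all
    · exfalso
      simp only [List.mem_cons, List.mem_singleton, List.not_mem_nil, or_false] at hp hq hr
      rcases hp with rfl | rfl <;> rcases hq with rfl | rfl <;> rcases hr with rfl | rfl <;>
        simp_all
    · have hpos : (0:ℤ) < 2 ^ m' := by positivity
      have hpos2 : (0:ℤ) < 2 ^ m := by positivity
      simp only [List.mem_cons, List.mem_singleton, List.not_mem_nil, or_false] at hp hq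
      rcases hp with rfl | rfl
      · rcases hq with rfl | rfl
        · exfalso
          have h0 : (0:ℤ) = 2 ^ m' := by simpa using hd
          linarith
        · have heq : (2:ℤ) ^ m = 2 ^ m' := by simpa [hcast] using hd
          have heqn : (2:ℕ) ^ m = 2 ^ m' := by exact_mod_cast heq
          have := Nat.pow_right_injective (by norm_num) heqn
          subst this
          exact hm'
      · rcases hq with rfl | rfl
        · exfalso
          have h0 : -((2:ℤ) ^ m) = 2 ^ m' := by simpa [hcast] using hd
          linarith
        · exfalso
          have h0 : (0:ℤ) = 2 ^ m' := by simpa using hd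
          linarith


/-- If `L` is recursively enumerable then `X_L` is a Π⁰₁ subshift (defined by an
RE set of forbidden patterns); moreover, if `L` is RE-complete, then the set of
patterns not occurring in `X_L` is RE (equivalently, the language of occurring
patterns is co-RE) and complete under many-one reductions: every RE set reduces
to the set of non-occurring patterns. -/
theorem XL_Pi01_and_complete (L : ℕ → Prop) (hL : REPred L) :
    (∃ F : List (ℤ × Bool) → Prop, REPred F ∧
        XL L = {x | ∀ P, F P → ∀ v : ℤ, ¬ patOccursAt1 P v x}) ∧
    ((∀ L' : ℕ → Prop, REPred L' → L' ≤₀ L) →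
      REPred (fun P : List (ℤ × Bool) => ∀ x ∈ XL L, ∀ v : ℤ, ¬ patOccursAt1 P v x) ∧
      ∀ L' : ℕ → Prop, REPred L' →
        L' ≤₀ (fun P : List (ℤ × Bool) => ∀ x ∈ XL L, ∀ v : ℤ, ¬ patOccursAt1 P v x)) := by
  have hre := rePred_notOcc L hL
  constructor
  · exact ⟨fun P => ∀ x ∈ XL L, ∀ v : ℤ, ¬ patOccursAt1 P v x, hre, XL_eq L⟩
  · intro hcomp
    refine ⟨hre, fun L' hL' => (hcomp L' hL').trans ?_⟩
    exact ⟨fun m => [((0:ℤ), true), (Int.ofNat (2 ^ m), true)],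
      primrec_redF.to_comp, fun m => L_iff_notOcc L m⟩
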